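/- Let j, k, n be positive integers with j < n and j ≤ k, and let p₀, …, p_k ∈ ℝ^{1,n} be points such that dim V(p₀,…,p_k) = dim V(p₀,…,p_j) = j. Then the Lorentzian distance-squared mapping L_{(p₀,…,p_k)} : ℝ^{1,n} → ℝ^{k+1} is A-equivalent to τ_{(j,k)} ∘ Φ_{j+1} if and only if V(p₀,…,p_k) is time-like. -/

import Mathlib

/-- A `C^∞` diffeomorphism of a normed space onto itself. -/
def IsSmoothDiffeo {E : Type*} [NormedAddCommGroup E] [NormedSpace ℝ E] (φ : E → E) : Prop :=
  ContDiff ℝ (⊤ : ℕ∞) φ ∧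
    ∃ φi : E → E, ContDiff ℝ (⊤ : ℕ∞) φi ∧ (∀ x, φi (φ x) = x) ∧ (∀ y, φ (φi y) = y)

/-- `f` and `g` are `𝒜`-equivalent: `ψ ∘ f ∘ φ = g` for some `C^∞` diffeomorphisms
`φ` of the source and `ψ` of the target. -/
def AEquiv {E F : Type*} [NormedAddCommGroup E] [NormedSpace ℝ E]
    [NormedAddCommGroup F] [NormedSpace ℝ F] (f g : E → F) : Prop :=
  ∃ (φ : E → E) (ψ : F → F), IsSmoothDiffeo φ ∧ IsSmoothDiffeo ψ ∧ ψ ∘ f ∘ φ = g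

/-- The Lorentzian inner product `⟨x,y⟩ = -x₀y₀ + x₁y₁ + ⋯ + xₙyₙ` on `ℝ^{1,n}`. -/
def lorentz {n : ℕ} (x y : Fin (n + 1) → ℝ) : ℝ :=
  -(x 0 * y 0) + ∑ i : Fin n, x i.succ * y i.succ

/-- The Lorentzian distance-squared mapping
`L_{(p₀,…,p_k)}(x) = (⟨x-p₀,x-p₀⟩, …, ⟨x-p_k,x-p_k⟩)`. -/
def lorentzDistSqMap {n k : ℕ} (p : Fin (k + 1) → (Fin (n + 1) → ℝ))
    (x : Fin (n + 1) → ℝ) : Fin (k + 1) → ℝ :=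
  fun i => lorentz (x - p i) (x - p i)

/-- The recognition subspace `V(p₀,…,p_k)`, the span of `p₁ - p₀, …, p_k - p₀`. -/
def recSub {n k : ℕ} (p : Fin (k + 1) → (Fin (n + 1) → ℝ)) : Submodule ℝ (Fin (n + 1) → ℝ) :=
  Submodule.span ℝ (Set.range fun i : Fin k => p i.succ - p 0)

/-- A subspace of `ℝ^{1,n}` is time-like if it contains a time-like vector. -/
def TimeLike {n : ℕ} (W : Submodule ℝ (Fin (n + 1) → ℝ)) : Prop :=
  ∃ v ∈ W, lorentz v v < 0

/-- A subspace of `ℝ^{1,n}` is space-like if every nonzero vector in it is space-like. -/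
def SpaceLike {n : ℕ} (W : Submodule ℝ (Fin (n + 1) → ℝ)) : Prop :=
  ∀ v ∈ W, v ≠ 0 → 0 < lorentz v v

/-- A subspace of `ℝ^{1,n}` is light-like if it is neither time-like nor space-like. -/
def LightLike {n : ℕ} (W : Submodule ℝ (Fin (n + 1) → ℝ)) : Prop :=
  ¬ TimeLike W ∧ ¬ SpaceLike W


set_option synthInstance.maxHeartbeats 1000000
set_option maxHeartbeats 1000000

namespace LZ

open Module Finset

variable {n : ℕ}

lemma lorentz_comm (x y : Fin (n + 1) → ℝ) : lorentz x y = lorentz y x := by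
  unfold lorentz
  congr 1
  · ring
  · exact Finset.sum_congr rfl fun i _ => mul_comm _ _

lemma lorentz_add_left (x y z : Fin (n + 1) → ℝ) :
    lorentz (x + y) z = lorentz x z + lorentz y z := by
  unfold lorentz
  simp only [Pi.add_apply, add_mul]
  rw [Finset.sum_add_distrib]
  ring

lemma lorentz_smul_left (c : ℝ) (x y : Fin (n + 1) → ℝ) :
    lorentz (c • x) y = c * lorentz x y := by
  unfold lorentz
  simp only [Pi.smul_apply, smul_eq_mul, mul_assoc]
  rw [← Finset.mul_sum]
  ring

/-- The Lorentz form as a bilinear map. -/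
noncomputable def bl {n : ℕ} : (Fin (n + 1) → ℝ) →ₗ[ℝ] (Fin (n + 1) → ℝ) →ₗ[ℝ] ℝ :=
  LinearMap.mk₂ ℝ lorentz lorentz_add_left
    (fun c x y => by rw [lorentz_smul_left, smul_eq_mul])
    (fun x y z => by
      rw [lorentz_comm x (y + z), lorentz_add_left, lorentz_comm y x, lorentz_comm z x])
    (fun c x y => by
      rw [lorentz_comm, lorentz_smul_left, lorentz_comm y x, smul_eq_mul])

@[simp] lemma bl_apply (x y : Fin (n + 1) → ℝ) : bl x y = lorentz x y := rfl

lemma lorentz_zero_left (y : Fin (n + 1) → ℝ) : lorentz 0 y = 0 := by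
  simp [lorentz]

lemma lorentz_zero_right (x : Fin (n + 1) → ℝ) : lorentz x 0 = 0 := by
  rw [lorentz_comm]; exact lorentz_zero_left x

lemma lorentz_sum_left {ι : Type*} (s : Finset ι) (f : ι → (Fin (n + 1) → ℝ))
    (y : Fin (n + 1) → ℝ) : lorentz (∑ i ∈ s, f i) y = ∑ i ∈ s, lorentz (f i) y :=
  map_sum ((bl (n := n)).flip y) f s

lemma lorentz_sum_right {ι : Type*} (s : Finset ι) (x : Fin (n + 1) → ℝ)
    (f : ι → (Fin (n + 1) → ℝ)) : lorentz x (∑ i ∈ s, f i) = ∑ i ∈ s, lorentz x (f i) :=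
  map_sum (bl x) f s

lemma lorentz_smul_right (c : ℝ) (x y : Fin (n + 1) → ℝ) :
    lorentz x (c • y) = c * lorentz x y := by
  rw [lorentz_comm, lorentz_smul_left, lorentz_comm]

lemma lorentz_sub_sub (x y : Fin (n + 1) → ℝ) :
    lorentz (x - y) (x - y) = lorentz x x - 2 * lorentz x y + lorentz y y := by
  unfold lorentz
  simp only [Pi.sub_apply]
  rw [Finset.sum_congr rfl (fun i _ => show
    (x i.succ - y i.succ) * (x i.succ - y i.succ) =
      x i.succ * x i.succ - 2 * (x i.succ * y i.succ) + y i.succ * y i.succ by ring)]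
  rw [Finset.sum_add_distrib, Finset.sum_sub_distrib, ← Finset.mul_sum]
  ring

lemma lorentz_add_add (x y : Fin (n + 1) → ℝ) :
    lorentz (x + y) (x + y) = lorentz x x + 2 * lorentz x y + lorentz y y := by
  rw [lorentz_add_left, lorentz_comm x (x + y), lorentz_comm y (x + y),
    lorentz_add_left, lorentz_add_left, lorentz_comm y x]
  ring

/-- key lemma L1: a nonzero vector orthogonal to a time-like vector is space-like -/
lemma pos_of_ortho_timelike {b s : Fin (n + 1) → ℝ} (hb : lorentz b b < 0)
    (ho : lorentz s b = 0) (hs : s ≠ 0) : 0 < lorentz s s := by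
  unfold lorentz at *
  set A := ∑ i : Fin n, s i.succ * s i.succ with hA
  set B := ∑ i : Fin n, b i.succ * b i.succ with hB
  set C := ∑ i : Fin n, s i.succ * b i.succ with hC
  have hA0 : 0 ≤ A := Finset.sum_nonneg fun i _ => mul_self_nonneg _
  have hB0 : 0 ≤ B := Finset.sum_nonneg fun i _ => mul_self_nonneg _
  have hCS : C ^ 2 ≤ A * B := by
    have := Finset.sum_mul_sq_le_sq_mul_sq Finset.univ (fun i : Fin n => s i.succ)
      (fun i : Fin n => b i.succ)
    calc C ^ 2 ≤ (∑ i : Fin n, (s i.succ) ^ 2) * ∑ i : Fin n, (b i.succ) ^ 2 := this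
      _ = A * B := by rw [hA, hB]; congr 1 <;> exact Finset.sum_congr rfl fun i _ => by ring
  rcases eq_or_lt_of_le hA0 with hA0' | hA0'
  · -- A = 0 : all spatial coords of s vanish
    exfalso
    have hzero : ∀ i : Fin n, s i.succ = 0 := by
      intro i
      have := (Finset.sum_eq_zero_iff_of_nonneg
        (fun i _ => mul_self_nonneg (s i.succ))).mp hA0'.symm i (Finset.mem_univ i)
      exact mul_self_eq_zero.mp this
    have hC0 : C = 0 := Finset.sum_eq_zero fun i _ => by rw [hzero i, zero_mul]
    have hb0 : b 0 ≠ 0 := by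
      intro h
      rw [h] at hb
      nlinarith
    have hs0 : s 0 = 0 := by
      rw [hC0] at ho
      have : s 0 * b 0 = 0 := by linarith
      rcases mul_eq_zero.mp this with h | h
      · exact h
      · exact absurd h hb0
    apply hs
    funext m
    refine Fin.cases ?_ ?_ m
    · exact hs0
    · exact hzero
  · -- A > 0
    by_contra hcon
    push_neg at hcon
    have hs0A : A ≤ s 0 * s 0 := by linarith
    have hCval : C = s 0 * b 0 := by linarith
    have h1 : A * B ≤ (s 0 * s 0) * B := mul_le_mul_of_nonneg_right hs0A hB0
    have hs0pos : 0 < s 0 * s 0 := lt_of_lt_of_le hA0' hs0A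
    have h2 : (s 0 * s 0) * B < (s 0 * s 0) * (b 0 * b 0) := by
      apply mul_lt_mul_of_pos_left _ hs0pos
      linarith
    have hC2 : C ^ 2 = s 0 * s 0 * (b 0 * b 0) := by rw [hCval]; ring
    linarith

lemma lorentz_ortho_span {ι : Type*} [Fintype ι] {u : Fin (n + 1) → ℝ}
    {v : ι → (Fin (n + 1) → ℝ)} (h : ∀ i, lorentz (v i) u = 0) {x : Fin (n + 1) → ℝ}
    (hx : x ∈ Submodule.span ℝ (Set.range v)) : lorentz x u = 0 := by
  obtain ⟨c, rfl⟩ := (Submodule.mem_span_range_iff_exists_fun ℝ).mp hx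
  rw [lorentz_sum_left]
  exact Finset.sum_eq_zero fun i _ => by rw [lorentz_smul_left, h i, mul_zero]

end LZ

namespace LZ
open Module Finset

variable {n : ℕ}

/-- Dual family for a spanning family on which the form is nondegenerate. -/
lemma exists_dual_family {j : ℕ} (w : Fin j → (Fin (n + 1) → ℝ))
    (hrank : finrank ℝ (Submodule.span ℝ (Set.range w)) = j)
    (hnd : ∀ x ∈ Submodule.span ℝ (Set.range w), (∀ i, lorentz x (w i) = 0) → x = 0) :
    ∃ a : Fin j → (Fin (n + 1) → ℝ), (∀ m, a m ∈ Submodule.span ℝ (Set.range w)) ∧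
      ∀ m i, lorentz (a m) (w i) = if (m : ℕ) = (i : ℕ) then 1 else 0 := by
  set V := Submodule.span ℝ (Set.range w) with hV
  set Φ : V →ₗ[ℝ] (Fin j → ℝ) :=
    (LinearMap.pi fun i => (bl (n := n)).flip (w i)).domRestrict V with hΦ
  have hker : LinearMap.ker Φ = ⊥ := by
    rw [LinearMap.ker_eq_bot']
    intro m hm
    have : ∀ i, lorentz (m : Fin (n + 1) → ℝ) (w i) = 0 := by
      intro i
      have := congrFun hm i
      simpa [hΦ, LinearMap.domRestrict_apply, LinearMap.pi_apply] using this
    have := hnd m m.2 this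
    exact Subtype.ext this
  have hsurj : Function.Surjective Φ := by
    rw [← LinearMap.range_eq_top]
    apply Submodule.eq_top_of_finrank_eq
    have := LinearMap.finrank_range_add_finrank_ker Φ
    rw [hker, finrank_bot, add_zero, hrank] at this
    rw [this, Module.finrank_fin_fun]
  choose a ha using fun m => hsurj (Pi.single m 1)
  refine ⟨fun m => (a m : Fin (n + 1) → ℝ), fun m => (a m).2, fun m i => ?_⟩
  have := congrFun (ha m) i
  simp only [hΦ, LinearMap.domRestrict_apply, LinearMap.pi_apply] at this
  rw [show ((bl (n := n)).flip (w i)) ((a m : Fin (n + 1) → ℝ)) =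
    lorentz ((a m : Fin (n + 1) → ℝ)) (w i) from rfl] at this
  rw [this, Pi.single_apply]
  by_cases h : i = m
  · simp [h]
  · have h2 : (m : ℕ) ≠ (i : ℕ) := fun hc => h (Fin.ext hc.symm)
    simp [h, h2]

/-- Orthonormal family of prescribed size in a subspace on which the form is positive. -/
lemma exists_orthonormal_family (d : ℕ) (W : Submodule ℝ (Fin (n + 1) → ℝ))
    (hpos : ∀ v ∈ W, v ≠ 0 → 0 < lorentz v v) (hd : d ≤ finrank ℝ W) :
    ∃ f : Fin d → (Fin (n + 1) → ℝ), (∀ i, f i ∈ W) ∧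
      ∀ i i', lorentz (f i) (f i') = if i = i' then 1 else 0 := by
  induction d generalizing W with
  | zero => exact ⟨Fin.elim0, fun i => i.elim0, fun i => i.elim0⟩
  | succ d ih =>
    have hW : W ≠ ⊥ := by
      intro h
      rw [h, finrank_bot] at hd
      omega
    obtain ⟨v, hvW, hv0⟩ := Submodule.exists_mem_ne_zero_of_ne_bot hW
    have hvv : 0 < lorentz v v := hpos v hvW hv0
    set u := (Real.sqrt (lorentz v v))⁻¹ • v with hu
    have huW : u ∈ W := Submodule.smul_mem W _ hvW
    have hsq : Real.sqrt (lorentz v v) > 0 := Real.sqrt_pos.mpr hvv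
    have huu : lorentz u u = 1 := by
      rw [hu, lorentz_smul_left, lorentz_smul_right]
      rw [← mul_assoc, ← mul_inv]
      rw [← Real.sqrt_mul_self hvv.le]
      field_simp
      rw [Real.sq_sqrt (Real.sqrt_nonneg _)]
    -- the orthogonal complement of u inside W
    set ρ : W →ₗ[ℝ] ℝ := ((bl (n := n)).flip u).domRestrict W with hρ
    set W' := W ⊓ LinearMap.ker ((bl (n := n)).flip u) with hW'
    have hmap : Submodule.map W.subtype (LinearMap.ker ρ) = W' := by
      ext x
      simp only [Submodule.mem_map, LinearMap.mem_ker, hW', Submodule.mem_inf, hρ]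
      constructor
      · rintro ⟨y, hy, rfl⟩
        exact ⟨y.2, by simpa [LinearMap.domRestrict_apply] using hy⟩
      · rintro ⟨hxW, hx⟩
        exact ⟨⟨x, hxW⟩, by simpa [LinearMap.domRestrict_apply] using hx, rfl⟩
    have hrank' : d ≤ finrank ℝ W' := by
      have h1 := LinearMap.finrank_range_add_finrank_ker ρ
      have h2 : finrank ℝ (LinearMap.range ρ) ≤ 1 := by
        have := Submodule.finrank_le (LinearMap.range ρ)
        simpa using this
      have h3 : finrank ℝ W' = finrank ℝ (LinearMap.ker ρ) := by
        rw [← hmap]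
        exact (Submodule.equivMapOfInjective W.subtype W.injective_subtype
          (LinearMap.ker ρ)).symm.finrank_eq
      omega
    obtain ⟨f', hf'W, hf'⟩ := ih W'
      (fun x hx hx0 => hpos x ((Submodule.mem_inf.mp hx).1) hx0) hrank'
    have hf'ort : ∀ i, lorentz (f' i) u = 0 := fun i => by
      have := (Submodule.mem_inf.mp (hf'W i)).2
      simpa [LinearMap.mem_ker] using this
    refine ⟨Fin.cons u f', ?_, ?_⟩
    · intro i
      induction i using Fin.cases with
      | zero => simpa using huW
      | succ i2 => simpa using (Submodule.mem_inf.mp (hf'W i2)).1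
    · intro i i'
      induction i using Fin.cases with
      | zero =>
        induction i' using Fin.cases with
        | zero => simpa using huu
        | succ i2 =>
          have h0 : ((0 : Fin (d+1)) ≠ i2.succ) := (Fin.succ_ne_zero i2).symm
          simp only [Fin.cons_zero, Fin.cons_succ, if_neg h0]
          rw [lorentz_comm]
          exact hf'ort i2
      | succ i2 =>
        induction i' using Fin.cases with
        | zero =>
          simp only [Fin.cons_succ, Fin.cons_zero, if_neg (Fin.succ_ne_zero i2)]
          exact hf'ort i2
        | succ i3 =>
          simp only [Fin.cons_succ, hf' i2 i3, Fin.succ_inj]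

end LZ

namespace LZ
open Module Finset

variable {n : ℕ}

lemma lorentz_sub_left (x y z : Fin (n + 1) → ℝ) :
    lorentz (x - y) z = lorentz x z - lorentz y z := by
  have h : x - y = x + (-1 : ℝ) • y := by module
  rw [h, lorentz_add_left, lorentz_smul_left]; ring

lemma lorentz_sub_right (x y z : Fin (n + 1) → ℝ) :
    lorentz x (y - z) = lorentz x y - lorentz x z := by
  rw [lorentz_comm, lorentz_sub_left, lorentz_comm y x, lorentz_comm z x]

/-- If the recognition subspace is not time-like, there is a nonzero null vector
orthogonal to it. -/
lemma exists_null_ortho {j : ℕ} (hjn : j < n)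
    (w : Fin j → (Fin (n + 1) → ℝ))
    (hrank : finrank ℝ (Submodule.span ℝ (Set.range w)) = j)
    (hnt : ∀ v ∈ Submodule.span ℝ (Set.range w), 0 ≤ lorentz v v) :
    ∃ u : Fin (n + 1) → ℝ, u ≠ 0 ∧ lorentz u u = 0 ∧ ∀ i, lorentz u (w i) = 0 := by
  set V := Submodule.span ℝ (Set.range w) with hV
  by_cases hSL : ∃ v ∈ V, v ≠ 0 ∧ lorentz v v ≤ 0
  · -- light-like case : a null vector inside V
    obtain ⟨v, hvV, hv0, hvle⟩ := hSL
    have hvv : lorentz v v = 0 := le_antisymm hvle (hnt v hvV)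
    refine ⟨v, hv0, hvv, fun i => ?_⟩
    set A := lorentz v (w i) with hA
    set B := lorentz (w i) (w i) with hB
    have hwV : w i ∈ V := Submodule.subset_span ⟨i, rfl⟩
    have hB0 : 0 ≤ B := hnt _ hwV
    have key : ∀ t : ℝ, 0 ≤ 2 * t * A + t ^ 2 * B := by
      intro t
      have hmem : v + t • w i ∈ V := Submodule.add_mem V hvV (Submodule.smul_mem V t hwV)
      have h2 := hnt _ hmem
      rw [lorentz_add_add, hvv, lorentz_smul_right, lorentz_smul_left,
        lorentz_smul_right] at h2
      nlinarith [h2]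
    have hB1 : (0:ℝ) < B + 1 := by linarith
    have h := key (-(A) / (B + 1))
    have hexp : 2 * (-(A) / (B + 1)) * A + (-(A) / (B + 1)) ^ 2 * B
        = (-(A ^ 2) * (B + 2)) / (B + 1) ^ 2 := by
      field_simp
      ring
    rw [hexp] at h
    have hc : (0:ℝ) < (B + 1) ^ 2 := by positivity
    rw [le_div_iff₀ hc, zero_mul] at h
    have hA2 : A ^ 2 = 0 := by nlinarith [sq_nonneg A]
    exact (pow_eq_zero_iff two_ne_zero).mp hA2
  · -- space-like case
    push_neg at hSL
    have hSL' : ∀ v ∈ V, v ≠ 0 → 0 < lorentz v v := by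
      intro v hv hv0
      have := hSL v hv hv0
      linarith
    have hnd : ∀ x ∈ V, (∀ i, lorentz x (w i) = 0) → x = 0 := by
      intro x hx hxw
      by_contra h0
      have h1 := hSL' x hx h0
      have h2 : lorentz x x = 0 :=
        lorentz_ortho_span (fun i => by rw [lorentz_comm]; exact hxw i) hx
      linarith
    obtain ⟨a, haV, ha⟩ := exists_dual_family w hrank hnd
    set e0 : Fin (n + 1) → ℝ := fun m => if m = 0 then (1:ℝ) else 0 with he0
    have he00 : lorentz e0 e0 = -1 := by
      simp [lorentz, he0, Fin.succ_ne_zero]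
    set vV : Fin (n + 1) → ℝ := ∑ m : Fin j, (lorentz e0 (w m)) • a m with hvVdef
    have hvV : vV ∈ V := Submodule.sum_mem V fun m _ => Submodule.smul_mem V _ (haV m)
    set b : Fin (n + 1) → ℝ := e0 - vV with hbdef
    have hbw : ∀ i, lorentz b (w i) = 0 := by
      intro i
      rw [hbdef, lorentz_sub_left]
      have : lorentz vV (w i) = lorentz e0 (w i) := by
        rw [hvVdef, lorentz_sum_left]
        rw [Finset.sum_congr rfl (fun m _ => by rw [lorentz_smul_left, ha m i])]
        simp [Fin.val_eq_val, mul_ite]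
      rw [this]; ring
    have hbV : ∀ x ∈ V, lorentz x b = 0 := fun x hx =>
      lorentz_ortho_span (fun i => by rw [lorentz_comm]; exact hbw i) hx
    have hbb : lorentz b b < 0 := by
      have hsplit : lorentz e0 e0 = lorentz b b + 2 * lorentz b vV + lorentz vV vV := by
        have : e0 = b + vV := by rw [hbdef]; abel
        conv_lhs => rw [this]
        rw [lorentz_add_add]
      have h1 : lorentz b vV = 0 := by rw [lorentz_comm]; exact hbV vV hvV
      have h2 : 0 ≤ lorentz vV vV := hnt vV hvV
      rw [he00, h1] at hsplit
      linarith
    -- find s orthogonal to V and b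
    set W2 : Fin (j + 1) → (Fin (n + 1) → ℝ) := Fin.snoc w b with hW2
    set M : (Fin (n + 1) → ℝ) →ₗ[ℝ] (Fin (j + 1) → ℝ) :=
      LinearMap.pi (fun i => (bl (n := n)).flip (W2 i)) with hM
    have hkerne : LinearMap.ker M ≠ ⊥ := by
      intro hbot
      have h1 := LinearMap.finrank_range_add_finrank_ker M
      have h2 : finrank ℝ (LinearMap.range M) ≤ j + 1 := by
        have := Submodule.finrank_le (LinearMap.range M)
        rwa [Module.finrank_fin_fun] at this
      rw [hbot, finrank_bot, add_zero, Module.finrank_fin_fun] at h1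
      omega
    obtain ⟨s, hsker, hs0⟩ := Submodule.exists_mem_ne_zero_of_ne_bot hkerne
    have hMs : M s = 0 := hsker
    have hsw : ∀ i : Fin j, lorentz s (w i) = 0 := by
      intro i
      have := congrFun hMs i.castSucc
      simp only [hM, LinearMap.pi_apply, Pi.zero_apply] at this
      rw [show W2 i.castSucc = w i by simp [hW2]] at this
      exact this
    have hsb : lorentz s b = 0 := by
      have := congrFun hMs (Fin.last j)
      simp only [hM, LinearMap.pi_apply, Pi.zero_apply] at this
      rw [show W2 (Fin.last j) = b by simp [hW2]] at this
      exact this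
    have hss : 0 < lorentz s s := pos_of_ortho_timelike hbb hsb hs0
    set α := Real.sqrt (-(lorentz b b)) with hα
    set β := Real.sqrt (lorentz s s) with hβ
    have hα2 : α * α = -(lorentz b b) := Real.mul_self_sqrt (by linarith)
    have hβ2 : β * β = lorentz s s := Real.mul_self_sqrt hss.le
    have hβpos : 0 < β := Real.sqrt_pos.mpr hss
    set u : Fin (n + 1) → ℝ := β • b + α • s with hu
    have hbs : lorentz b s = 0 := by rw [lorentz_comm]; exact hsb
    have huu : lorentz u u = 0 := by
      rw [hu, lorentz_add_add, lorentz_smul_left, lorentz_smul_right,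
        lorentz_smul_left, lorentz_smul_right, lorentz_smul_left, lorentz_smul_right, hbs]
      nlinarith [hα2, hβ2]
    have hu0 : u ≠ 0 := by
      intro h0
      have : lorentz u b = 0 := by rw [h0]; exact lorentz_zero_left b
      rw [hu, lorentz_add_left, lorentz_smul_left, lorentz_smul_left, hsb] at this
      nlinarith [hβpos, hbb]
    refine ⟨u, hu0, huu, fun i => ?_⟩
    rw [hu, lorentz_add_left, lorentz_smul_left, lorentz_smul_left, hbw i, hsw i]
    ring

end LZ

namespace LZ
open Module Finset

variable {n : ℕ}

lemma normal_form_fiber_compact {j k : ℕ} (hj : 1 ≤ j) (hjn : j < n) (hjk : j ≤ k)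
    (z : Fin (k + 1) → ℝ) :
    IsCompact ((fun (x : Fin (n + 1) → ℝ) (i : Fin (k + 1)) =>
        if h : (i : ℕ) < j then x ⟨(i : ℕ), by omega⟩
        else if (i : ℕ) = j then
          ∑ l ∈ Finset.univ.filter (fun l : Fin (n + 1) => j ≤ (l : ℕ)), x l ^ 2
        else 0) ⁻¹' {z}) := by
  set g := (fun (x : Fin (n + 1) → ℝ) (i : Fin (k + 1)) =>
        if h : (i : ℕ) < j then x ⟨(i : ℕ), by omega⟩
        else if (i : ℕ) = j then
          ∑ l ∈ Finset.univ.filter (fun l : Fin (n + 1) => j ≤ (l : ℕ)), x l ^ 2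
        else 0) with hg
  have hgcont : Continuous g := by
    apply continuous_pi
    intro i
    by_cases h : (i : ℕ) < j
    · simp only [hg, dif_pos h]
      exact continuous_apply _
    · simp only [hg, dif_neg h]
      by_cases h2 : (i : ℕ) = j
      · simp only [if_pos h2]
        exact continuous_finset_sum _ fun l _ => (continuous_apply l).pow 2
      · simp only [if_neg h2]
        exact continuous_const
  apply Metric.isCompact_of_isClosed_isBounded
  · exact IsClosed.preimage hgcont isClosed_singleton
  · set ij : Fin (k + 1) := ⟨j, by omega⟩ with hij
    set C := ‖z‖ + Real.sqrt |z ij| with hC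
    have hC0 : 0 ≤ C := add_nonneg (norm_nonneg z) (Real.sqrt_nonneg _)
    rw [isBounded_iff_forall_norm_le]
    refine ⟨C, fun x hx => ?_⟩
    have hgx : g x = z := by
      simpa [Set.mem_preimage, Set.mem_singleton_iff] using hx
    rw [pi_norm_le_iff_of_nonneg hC0]
    intro l
    rw [Real.norm_eq_abs]
    by_cases hl : (l : ℕ) < j
    · set i : Fin (k + 1) := ⟨(l : ℕ), by omega⟩ with hi
      have := congrFun hgx i
      have hil : ((i : ℕ) < j) := hl
      rw [hg] at this
      simp only [dif_pos hil] at this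
      have hidx : (⟨(i : ℕ), by omega⟩ : Fin (n + 1)) = l := by
        apply Fin.ext
        simp [hi]
      rw [hidx] at this
      rw [this]
      calc |z i| ≤ ‖z‖ := by
            have := norm_le_pi_norm z i
            rwa [Real.norm_eq_abs] at this
        _ ≤ C := by rw [hC]; linarith [Real.sqrt_nonneg |z ij|]
    · have := congrFun hgx ij
      rw [hg] at this
      have hnj : ¬ ((ij : ℕ) < j) := by simp [hij]
      have hjj : ((ij : ℕ) = j) := rfl
      simp only [dif_neg hnj, if_pos hjj] at this
      have hmem : l ∈ Finset.univ.filter (fun l : Fin (n + 1) => j ≤ (l : ℕ)) := by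
        simp [Finset.mem_filter]; omega
      have hle : x l ^ 2 ≤ z ij := by
        rw [← this]
        exact Finset.single_le_sum (fun l' _ => sq_nonneg (x l')) hmem
      have h1 : |x l| ≤ Real.sqrt (z ij) := by
        rw [← Real.sqrt_sq_eq_abs]
        exact Real.sqrt_le_sqrt hle
      calc |x l| ≤ Real.sqrt (z ij) := h1
        _ ≤ Real.sqrt |z ij| := Real.sqrt_le_sqrt (le_abs_self _)
        _ ≤ C := by rw [hC]; linarith [norm_nonneg z]

lemma backward {j k : ℕ} (hj : 1 ≤ j) (hjn : j < n) (hjk : j ≤ k)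
    (p : Fin (k + 1) → (Fin (n + 1) → ℝ))
    (w : Fin j → (Fin (n + 1) → ℝ))
    (hspan : Submodule.span ℝ (Set.range w) = recSub p)
    (hrank : finrank ℝ (Submodule.span ℝ (Set.range w)) = j)
    (hA : AEquiv (lorentzDistSqMap p)
      (fun (x : Fin (n + 1) → ℝ) (i : Fin (k + 1)) =>
        if h : (i : ℕ) < j then x ⟨(i : ℕ), by omega⟩
        else if (i : ℕ) = j then
          ∑ l ∈ Finset.univ.filter (fun l : Fin (n + 1) => j ≤ (l : ℕ)), x l ^ 2
        else 0)) : TimeLike (recSub p) := by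
  by_contra hT
  rw [TimeLike] at hT
  push_neg at hT
  have hnt : ∀ v ∈ Submodule.span ℝ (Set.range w), 0 ≤ lorentz v v := by
    intro v hv
    exact le_of_not_gt (by simpa using hT v (hspan ▸ hv))
  obtain ⟨u, hu0, huu, huw⟩ := exists_null_ortho hjn w hrank hnt
  have huV : ∀ x ∈ recSub p, lorentz x u = 0 := by
    intro x hx
    rw [← hspan] at hx
    exact lorentz_ortho_span (fun i => by rw [lorentz_comm]; exact huw i) hx
  have hmem : ∀ i : Fin (k + 1), p i - p 0 ∈ recSub p := by
    intro i
    refine Fin.cases ?_ ?_ i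
    · simp
    · intro i'
      exact Submodule.subset_span ⟨i', rfl⟩
  have hline : ∀ t : ℝ, lorentzDistSqMap p (p 0 + t • u) = lorentzDistSqMap p (p 0) := by
    intro t
    funext i
    unfold lorentzDistSqMap
    have harg : (p 0 + t • u) - p i = (p 0 - p i) + t • u := by abel
    rw [harg, lorentz_add_add]
    have h1 : lorentz (p 0 - p i) (t • u) = 0 := by
      rw [lorentz_smul_right]
      have : p 0 - p i = -(p i - p 0) := by abel
      rw [this, show -(p i - p 0) = (-1 : ℝ) • (p i - p 0) by module, lorentz_smul_left]
      rw [huV _ (hmem i)]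
      ring
    have h2 : lorentz (t • u) (t • u) = 0 := by
      rw [lorentz_smul_left, lorentz_smul_right, huu]; ring
    rw [h1, h2]; ring
  obtain ⟨φ, ψ, hφ, hψ, heq⟩ := hA
  obtain ⟨hφc, φi, hφic, hlφ, hrφ⟩ := hφ
  obtain ⟨hψc, ψi, hψic, hlψ, hrψ⟩ := hψ
  set f := lorentzDistSqMap p with hf
  set g := (fun (x : Fin (n + 1) → ℝ) (i : Fin (k + 1)) =>
        if h : (i : ℕ) < j then x ⟨(i : ℕ), by omega⟩
        else if (i : ℕ) = j then
          ∑ l ∈ Finset.univ.filter (fun l : Fin (n + 1) => j ≤ (l : ℕ)), x l ^ 2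
        else 0) with hg
  have hinj : Function.Injective ψ := fun a b hab => by
    have := congrArg ψi hab
    rwa [hlψ, hlψ] at this
  have hset : f ⁻¹' {f (p 0)} = φ '' (g ⁻¹' {ψ (f (p 0))}) := by
    ext x
    simp only [Set.mem_preimage, Set.mem_singleton_iff, Set.mem_image]
    constructor
    · intro hx
      refine ⟨φi x, ?_, hrφ x⟩
      have h1 := congrFun heq (φi x)
      simp only [Function.comp_apply, hrφ x] at h1
      rw [← h1, hx]
    · rintro ⟨y, hy, rfl⟩
      have h1 := congrFun heq y
      simp only [Function.comp_apply] at h1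
      rw [← h1] at hy
      exact hinj hy
  have hcomp : IsCompact (f ⁻¹' {f (p 0)}) := by
    rw [hset]
    exact (normal_form_fiber_compact hj hjn hjk _).image hφc.continuous
  obtain ⟨C, hC⟩ := isBounded_iff_forall_norm_le.1 hcomp.isBounded
  obtain ⟨m, hum⟩ := Function.ne_iff.mp hu0
  have hum' : (0:ℝ) < |u m| := abs_pos.2 hum
  have hC0 : ‖p 0‖ ≤ C := hC (p 0) (by simp [Set.mem_preimage])
  have hC0' : (0:ℝ) ≤ C := le_trans (norm_nonneg _) hC0
  set t := (C + 1 + |p 0 m|) / |u m| with ht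
  have ht0 : 0 ≤ t := by
    apply div_nonneg _ (abs_nonneg _)
    have := abs_nonneg (p 0 m)
    linarith
  have hxmem : (p 0 + t • u) ∈ f ⁻¹' {f (p 0)} := by
    simp only [Set.mem_preimage, Set.mem_singleton_iff]
    exact hline t
  have hxn := hC _ hxmem
  have hxm : |p 0 m + t * u m| ≤ C := by
    have := norm_le_pi_norm (p 0 + t • u) m
    rw [Real.norm_eq_abs] at this
    simp only [Pi.add_apply, Pi.smul_apply, smul_eq_mul] at this
    linarith
  have htu : |t * u m| = C + 1 + |p 0 m| := by
    rw [abs_mul, abs_of_nonneg ht0, ht, div_mul_cancel₀]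
    exact ne_of_gt hum'
  have habs : |t * u m| ≤ |p 0 m + t * u m| + |p 0 m| := by
    have h := abs_add_le (p 0 m + t * u m) (-(p 0 m))
    have h2 : (p 0 m + t * u m) + -(p 0 m) = t * u m := by ring
    rw [h2, abs_neg] at h
    exact h
  linarith

end LZ

namespace LZ
open Module Finset

variable {n : ℕ}

lemma ker_pi_iff {j : ℕ} (w : Fin j → (Fin (n + 1) → ℝ)) (v : Fin (n + 1) → ℝ) :
    v ∈ LinearMap.ker (LinearMap.pi (fun i : Fin j => (bl (n := n)).flip (w i))) ↔
      ∀ i, lorentz v (w i) = 0 := by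
  rw [LinearMap.mem_ker]
  constructor
  · intro h i
    exact congrFun h i
  · intro h
    funext i
    exact h i

lemma forward {j k : ℕ} (hj : 1 ≤ j) (hjn : j < n) (hjk : j ≤ k)
    (p : Fin (k + 1) → (Fin (n + 1) → ℝ))
    (w : Fin j → (Fin (n + 1) → ℝ))
    (hw : ∀ i : Fin j, w i = p ⟨(i : ℕ) + 1, by omega⟩ - p 0)
    (hspan : Submodule.span ℝ (Set.range w) = recSub p)
    (hrank : finrank ℝ (Submodule.span ℝ (Set.range w)) = j)
    (hT : TimeLike (recSub p)) :
    AEquiv (lorentzDistSqMap p)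
      (fun (x : Fin (n + 1) → ℝ) (i : Fin (k + 1)) =>
        if h : (i : ℕ) < j then x ⟨(i : ℕ), by omega⟩
        else if (i : ℕ) = j then
          ∑ l ∈ Finset.univ.filter (fun l : Fin (n + 1) => j ≤ (l : ℕ)), x l ^ 2
        else 0) := by
  obtain ⟨τ, hτV', hττ⟩ := hT
  have hτV : τ ∈ Submodule.span ℝ (Set.range w) := by rwa [hspan]
  -- nondegeneracy on V
  have hnd : ∀ x ∈ Submodule.span ℝ (Set.range w), (∀ i, lorentz x (w i) = 0) → x = 0 := by
    intro x hx hxw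
    by_contra h0
    have hτx : lorentz τ x = 0 :=
      lorentz_ortho_span (fun i => by rw [lorentz_comm]; exact hxw i) hτV
    have hxx : lorentz x x = 0 :=
      lorentz_ortho_span (fun i => by rw [lorentz_comm]; exact hxw i) hx
    have := pos_of_ortho_timelike hττ (by rw [lorentz_comm]; exact hτx) h0
    linarith
  obtain ⟨aV, haV, haVw⟩ := exists_dual_family w hrank hnd
  -- the orthogonal complement
  set Λ : (Fin (n + 1) → ℝ) →ₗ[ℝ] (Fin j → ℝ) :=
    LinearMap.pi (fun i : Fin j => (bl (n := n)).flip (w i)) with hΛ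
  have hposker : ∀ v ∈ LinearMap.ker Λ, v ≠ 0 → 0 < lorentz v v := by
    intro v hv hv0
    have hvw : ∀ i, lorentz v (w i) = 0 := (ker_pi_iff w v).mp hv
    have hτv : lorentz τ v = 0 :=
      lorentz_ortho_span (fun i => by rw [lorentz_comm]; exact hvw i) hτV
    exact pos_of_ortho_timelike hττ (by rw [lorentz_comm]; exact hτv) hv0
  have hkerrank : n + 1 - j ≤ finrank ℝ (LinearMap.ker Λ) := by
    have h1 := LinearMap.finrank_range_add_finrank_ker Λ
    have h2 : finrank ℝ (LinearMap.range Λ) ≤ j := by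
      have := Submodule.finrank_le (LinearMap.range Λ)
      rwa [Module.finrank_fin_fun] at this
    rw [Module.finrank_fin_fun] at h1
    omega
  obtain ⟨aW, haW, haWW⟩ :=
    exists_orthonormal_family (n + 1 - j) (LinearMap.ker Λ) hposker hkerrank
  -- the adapted basis
  set A : Fin (n + 1) → (Fin (n + 1) → ℝ) := fun m =>
    if h : (m : ℕ) < j then aV ⟨(m : ℕ), h⟩ else aW ⟨(m : ℕ) - j, by omega⟩ with hA
  have hGvw : ∀ (m : Fin (n + 1)) (i : Fin j),
      lorentz (A m) (w i) = if (m : ℕ) = (i : ℕ) then 1 else 0 := by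
    intro m i
    by_cases h : (m : ℕ) < j
    · rw [hA]; simp only [dif_pos h]
      exact haVw ⟨(m : ℕ), h⟩ i
    · rw [hA]; simp only [dif_neg h]
      rw [(ker_pi_iff w _).mp (haW _) i]
      have : ¬ ((m : ℕ) = (i : ℕ)) := by have := i.isLt; omega
      simp [this]
  have hGcross : ∀ (m m' : Fin (n + 1)), (m : ℕ) < j → ¬ ((m' : ℕ) < j) →
      lorentz (A m) (A m') = 0 := by
    intro m m' h h'
    have hmem : A m ∈ Submodule.span ℝ (Set.range w) := by
      rw [hA]; simp only [dif_pos h]; exact haV _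
    have hwAm' : ∀ i, lorentz (w i) (A m') = 0 := by
      intro i
      rw [hA]; simp only [dif_neg h']
      rw [lorentz_comm]
      exact (ker_pi_iff w _).mp (haW _) i
    exact lorentz_ortho_span hwAm' hmem
  have hGdiag : ∀ (m m' : Fin (n + 1)), ¬ ((m : ℕ) < j) → ¬ ((m' : ℕ) < j) →
      lorentz (A m) (A m') = if m = m' then 1 else 0 := by
    intro m m' h h'
    rw [hA]; simp only [dif_neg h, dif_neg h']
    rw [haWW]
    have h1 := m.isLt; have h2 := m'.isLt
    have hval : ((⟨(m : ℕ) - j, by omega⟩ : Fin (n + 1 - j))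
        = ⟨(m' : ℕ) - j, by omega⟩) ↔ m = m' := by
      rw [Fin.ext_iff, Fin.ext_iff]
      show (m : ℕ) - j = (m' : ℕ) - j ↔ (m : ℕ) = (m' : ℕ)
      omega
    simp only [hval]
  -- the linear equivalence
  set T : (Fin (n + 1) → ℝ) →ₗ[ℝ] (Fin (n + 1) → ℝ) :=
    { toFun := fun y => ∑ m, y m • A m
      map_add' := by
        intro x y
        simp only [Pi.add_apply, add_smul]
        rw [Finset.sum_add_distrib]
      map_smul' := by
        intro c x
        simp only [Pi.smul_apply, smul_eq_mul, RingHom.id_apply]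
        rw [Finset.smul_sum]
        exact Finset.sum_congr rfl fun m _ => by rw [mul_smul] } with hTdef
  have hTapp : ∀ y, T y = ∑ m, y m • A m := fun y => rfl
  have hTw : ∀ (y : Fin (n + 1) → ℝ) (i : Fin j),
      lorentz (T y) (w i) = y ⟨(i : ℕ), by omega⟩ := by
    intro y i
    rw [hTapp, lorentz_sum_left]
    have hc : ∀ m ∈ (Finset.univ : Finset (Fin (n + 1))),
        lorentz (y m • A m) (w i)
          = if m = (⟨(i : ℕ), by omega⟩ : Fin (n + 1)) then y m else 0 := by
      intro m _
      rw [lorentz_smul_left, hGvw m i]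
      by_cases hmm : m = (⟨(i : ℕ), by omega⟩ : Fin (n + 1))
      · rw [if_pos hmm, if_pos (by rw [hmm]), mul_one]
      · rw [if_neg hmm, if_neg (fun hcc => hmm (Fin.ext hcc)), mul_zero]
    rw [Finset.sum_congr rfl hc, Finset.sum_ite_eq']
    simp
  have hTA : ∀ (y : Fin (n + 1) → ℝ) (m' : Fin (n + 1)), ¬ ((m' : ℕ) < j) →
      lorentz (T y) (A m') = y m' := by
    intro y m' h'
    rw [hTapp, lorentz_sum_left]
    rw [Finset.sum_eq_single m']
    · rw [lorentz_smul_left, hGdiag m' m' h' h', if_pos rfl, mul_one]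
    · intro m _ hm
      rw [lorentz_smul_left]
      by_cases h : (m : ℕ) < j
      · rw [hGcross m m' h h', mul_zero]
      · rw [hGdiag m m' h h', if_neg hm, mul_zero]
    · intro hm
      exact absurd (Finset.mem_univ m') hm
  -- quadratic form decomposition
  have hTT : ∀ y : Fin (n + 1) → ℝ, lorentz (T y) (T y) =
      (∑ m ∈ Finset.univ.filter (fun m : Fin (n + 1) => (m : ℕ) < j),
        ∑ m' ∈ Finset.univ.filter (fun m' : Fin (n + 1) => (m' : ℕ) < j),
          y m * y m' * lorentz (A m) (A m'))
      + ∑ l ∈ Finset.univ.filter (fun l : Fin (n + 1) => j ≤ (l : ℕ)), y l ^ 2 := by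
    intro y
    have hexp : lorentz (T y) (T y) = ∑ m, ∑ m', y m * y m' * lorentz (A m) (A m') := by
      rw [hTapp, lorentz_sum_left]
      refine Finset.sum_congr rfl fun m _ => ?_
      rw [lorentz_smul_left, lorentz_sum_right]
      rw [Finset.mul_sum]
      refine Finset.sum_congr rfl fun m' _ => ?_
      rw [lorentz_smul_right]
      ring
    rw [hexp]
    rw [← Finset.sum_filter_add_sum_filter_not Finset.univ (fun m : Fin (n + 1) => (m : ℕ) < j)]
    congr 1
    · refine Finset.sum_congr rfl fun m hm => ?_
      rw [Finset.mem_filter] at hm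
      rw [← Finset.sum_filter_add_sum_filter_not Finset.univ
        (fun m' : Fin (n + 1) => (m' : ℕ) < j)]
      have : ∑ m' ∈ Finset.univ.filter (fun m' : Fin (n + 1) => ¬ ((m' : ℕ) < j)),
          y m * y m' * lorentz (A m) (A m') = 0 := by
        refine Finset.sum_eq_zero fun m' hm' => ?_
        rw [Finset.mem_filter] at hm'
        rw [hGcross m m' hm.2 hm'.2, mul_zero]
      rw [this, add_zero]
    · have hfe : Finset.univ.filter (fun m : Fin (n + 1) => ¬ ((m : ℕ) < j))
          = Finset.univ.filter (fun l : Fin (n + 1) => j ≤ (l : ℕ)) := by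
        ext m
        simp only [Finset.mem_filter, Finset.mem_univ, true_and]
        omega
      rw [← hfe]
      refine Finset.sum_congr rfl fun m hm => ?_
      rw [Finset.mem_filter] at hm
      have hsplit := Finset.sum_filter_add_sum_filter_not Finset.univ
        (fun m' : Fin (n + 1) => (m' : ℕ) < j)
        (fun m' => y m * y m' * lorentz (A m) (A m'))
      rw [← hsplit]
      have h1 : ∑ m' ∈ Finset.univ.filter (fun m' : Fin (n + 1) => ((m' : ℕ) < j)),
          y m * y m' * lorentz (A m) (A m') = 0 := by
        refine Finset.sum_eq_zero fun m' hm' => ?_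
        rw [Finset.mem_filter] at hm'
        rw [lorentz_comm, hGcross m' m hm'.2 hm.2, mul_zero]
      have h2 : ∑ m' ∈ Finset.univ.filter (fun m' : Fin (n + 1) => ¬ ((m' : ℕ) < j)),
          y m * y m' * lorentz (A m) (A m') = y m ^ 2 := by
        have hc : ∀ m' ∈ Finset.univ.filter (fun m' : Fin (n + 1) => ¬ ((m' : ℕ) < j)),
            y m * y m' * lorentz (A m) (A m') = if m' = m then y m * y m' else 0 := by
          intro m' hm'
          rw [Finset.mem_filter] at hm'
          rw [hGdiag m m' hm.2 hm'.2]
          by_cases hmm : m' = m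
          · subst hmm; simp
          · rw [if_neg (fun hcc => hmm hcc.symm), if_neg hmm, mul_zero]
        rw [Finset.sum_congr rfl hc, Finset.sum_ite_eq']
        rw [if_pos (by rw [Finset.mem_filter]; exact ⟨Finset.mem_univ m, hm.2⟩)]
        ring
      rw [h1, h2, zero_add]
  -- T is bijective
  have hTinj : Function.Injective T := by
    rw [← LinearMap.ker_eq_bot, LinearMap.ker_eq_bot']
    intro y hy
    funext m
    by_cases h : (m : ℕ) < j
    · have h1 := hTw y ⟨(m : ℕ), h⟩
      rw [hy, lorentz_zero_left] at h1
      have hmk : (⟨((⟨(m : ℕ), h⟩ : Fin j) : ℕ), by omega⟩ : Fin (n + 1)) = m :=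
        Fin.ext rfl
      rw [hmk] at h1
      exact h1.symm
    · have h1 := hTA y m h
      rw [hy, lorentz_zero_left] at h1
      exact h1.symm
  have hTbij : Function.Bijective T :=
    ⟨hTinj, (LinearMap.injective_iff_surjective).mp hTinj⟩
  set e : (Fin (n + 1) → ℝ) ≃ₗ[ℝ] (Fin (n + 1) → ℝ) :=
    LinearEquiv.ofBijective T hTbij with he
  have heapp : ∀ y, e y = T y := fun y => rfl
  -- the source diffeomorphism
  set φ : (Fin (n + 1) → ℝ) → (Fin (n + 1) → ℝ) := fun y => p 0 + T y with hφdef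
  set φi : (Fin (n + 1) → ℝ) → (Fin (n + 1) → ℝ) := fun x => e.symm (x - p 0) with hφidef
  have hTcd : ContDiff ℝ (⊤ : ℕ∞) (⇑T : (Fin (n + 1) → ℝ) → (Fin (n + 1) → ℝ)) := by
    have h1 := (LinearMap.toContinuousLinearMap T).contDiff (n := ((⊤ : ℕ∞) : WithTop ℕ∞))
    simpa using h1
  have hsymcd : ContDiff ℝ (⊤ : ℕ∞)
      (⇑(e.symm.toLinearMap) : (Fin (n + 1) → ℝ) → (Fin (n + 1) → ℝ)) := by
    have h1 := (LinearMap.toContinuousLinearMap e.symm.toLinearMap).contDiff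
      (n := ((⊤ : ℕ∞) : WithTop ℕ∞))
    simpa using h1
  have hφsm : IsSmoothDiffeo φ := by
    refine ⟨contDiff_const.add hTcd, φi, ?_, ?_, ?_⟩
    · exact hsymcd.comp (contDiff_id.sub contDiff_const)
    · intro x
      show e.symm ((p 0 + T x) - p 0) = x
      have harg : (p 0 + T x) - p 0 = T x := by abel
      rw [harg, ← heapp, e.symm_apply_apply]
    · intro x
      show p 0 + T (e.symm (x - p 0)) = x
      rw [← heapp, e.apply_symm_apply]
      abel
  -- target data
  have hmem : ∀ i : Fin (k + 1), p i - p 0 ∈ Submodule.span ℝ (Set.range w) := by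
    intro i
    rw [hspan]
    refine Fin.cases ?_ ?_ i
    · simp
    · intro i'
      exact Submodule.subset_span ⟨i', rfl⟩
  have hc' : ∀ i : Fin (k + 1), ∃ cc : Fin j → ℝ, ∑ m, cc m • w m = p i - p 0 :=
    fun i => (Submodule.mem_span_range_iff_exists_fun ℝ).mp (hmem i)
  choose c hc using hc'
  set K : Fin (k + 1) → ℝ := fun i => lorentz (p i - p 0) (p i - p 0) with hK
  set Zf : (Fin (k + 1) → ℝ) → Fin (n + 1) → ℝ := fun Y m =>
    if h : (m : ℕ) < j then
      (Y 0 - Y ⟨(m : ℕ) + 1, by omega⟩ + K ⟨(m : ℕ) + 1, by omega⟩) / 2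
    else 0 with hZf
  set QA : (Fin (k + 1) → ℝ) → ℝ := fun Y =>
    ∑ m ∈ Finset.univ.filter (fun m : Fin (n + 1) => (m : ℕ) < j),
      ∑ m' ∈ Finset.univ.filter (fun m' : Fin (n + 1) => (m' : ℕ) < j),
        Zf Y m * Zf Y m' * lorentz (A m) (A m') with hQA
  set ψ : (Fin (k + 1) → ℝ) → (Fin (k + 1) → ℝ) := fun Y i =>
    if h : (i : ℕ) < j then Zf Y ⟨(i : ℕ), by omega⟩
    else if (i : ℕ) = j then Y 0 - QA Y
    else Y i - Y 0 + 2 * (∑ m : Fin j, c i m * Zf Y ⟨(m : ℕ), by omega⟩) - K i with hψdef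
  set Zc : (Fin (k + 1) → ℝ) → Fin (n + 1) → ℝ := fun Z m =>
    if h : (m : ℕ) < j then Z ⟨(m : ℕ), by omega⟩ else 0 with hZc
  set QB : (Fin (k + 1) → ℝ) → ℝ := fun Z =>
    ∑ m ∈ Finset.univ.filter (fun m : Fin (n + 1) => (m : ℕ) < j),
      ∑ m' ∈ Finset.univ.filter (fun m' : Fin (n + 1) => (m' : ℕ) < j),
        Zc Z m * Zc Z m' * lorentz (A m) (A m') with hQB
  set Y0f : (Fin (k + 1) → ℝ) → ℝ := fun Z => Z ⟨j, by omega⟩ + QB Z with hY0f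
  set ψi : (Fin (k + 1) → ℝ) → (Fin (k + 1) → ℝ) := fun Z i =>
    if (i : ℕ) = 0 then Y0f Z
    else if h : (i : ℕ) < j + 1 then Y0f Z - 2 * Z ⟨(i : ℕ) - 1, by omega⟩ + K i
    else Z i + Y0f Z - 2 * (∑ m : Fin j, c i m * Z ⟨(m : ℕ), by omega⟩) + K i with hψidef
  -- branch lemmas for ψ
  have hψlt : ∀ (Y : Fin (k + 1) → ℝ) (i : Fin (k + 1)) (h : (i : ℕ) < j),
      ψ Y i = Zf Y ⟨(i : ℕ), by omega⟩ := by
    intro Y i h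
    simp only [hψdef, dif_pos h]
  have hψj : ∀ (Y : Fin (k + 1) → ℝ) (i : Fin (k + 1)), (i : ℕ) = j →
      ψ Y i = Y 0 - QA Y := by
    intro Y i h
    have h1 : ¬ ((i : ℕ) < j) := by omega
    simp only [hψdef, dif_neg h1, if_pos h]
  have hψgt : ∀ (Y : Fin (k + 1) → ℝ) (i : Fin (k + 1)), ¬ ((i : ℕ) < j) → (i : ℕ) ≠ j →
      ψ Y i = Y i - Y 0 + 2 * (∑ m : Fin j, c i m * Zf Y ⟨(m : ℕ), by omega⟩) - K i := by
    intro Y i h1 h2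
    simp only [hψdef, dif_neg h1, if_neg h2]
  -- branch lemmas for ψi
  have hψi0 : ∀ (Z : Fin (k + 1) → ℝ) (i : Fin (k + 1)), (i : ℕ) = 0 →
      ψi Z i = Y0f Z := by
    intro Z i h
    simp only [hψidef, if_pos h]
  have hψimid : ∀ (Z : Fin (k + 1) → ℝ) (i : Fin (k + 1)), (i : ℕ) ≠ 0 → (i : ℕ) < j + 1 →
      ψi Z i = Y0f Z - 2 * Z ⟨(i : ℕ) - 1, by omega⟩ + K i := by
    intro Z i h1 h2
    simp only [hψidef, if_neg h1, dif_pos h2]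
  have hψigt : ∀ (Z : Fin (k + 1) → ℝ) (i : Fin (k + 1)), ¬ ((i : ℕ) < j + 1) →
      ψi Z i = Z i + Y0f Z - 2 * (∑ m : Fin j, c i m * Z ⟨(m : ℕ), by omega⟩) + K i := by
    intro Z i h1
    have h2 : (i : ℕ) ≠ 0 := by omega
    simp only [hψidef, if_neg h2, dif_neg h1]
  have hZclt : ∀ (Z : Fin (k + 1) → ℝ) (m : Fin (n + 1)) (h : (m : ℕ) < j),
      Zc Z m = Z ⟨(m : ℕ), by omega⟩ := by
    intro Z m h
    simp only [hZc, dif_pos h]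
  have hZflt : ∀ (Y : Fin (k + 1) → ℝ) (m : Fin (n + 1)) (h : (m : ℕ) < j),
      Zf Y m = (Y 0 - Y ⟨(m : ℕ) + 1, by omega⟩ + K ⟨(m : ℕ) + 1, by omega⟩) / 2 := by
    intro Y m h
    simp only [hZf, dif_pos h]
  -- smoothness
  have hZfcd : ∀ m, ContDiff ℝ (⊤ : ℕ∞) (fun Y => Zf Y m) := by
    intro m
    by_cases h : (m : ℕ) < j
    · simp only [hZf, dif_pos h]
      exact (((contDiff_apply ℝ ℝ (0 : Fin (k + 1))).sub
        (contDiff_apply ℝ ℝ _)).add contDiff_const).div_const 2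
    · simp only [hZf, dif_neg h]
      exact contDiff_const
  have hZccd : ∀ m, ContDiff ℝ (⊤ : ℕ∞) (fun Z => Zc Z m) := by
    intro m
    by_cases h : (m : ℕ) < j
    · simp only [hZc, dif_pos h]
      exact contDiff_apply ℝ ℝ _
    · simp only [hZc, dif_neg h]
      exact contDiff_const
  have hQAcd : ContDiff ℝ (⊤ : ℕ∞) QA := by
    rw [hQA]
    apply ContDiff.sum
    intro m _
    apply ContDiff.sum
    intro m' _
    exact ((hZfcd m).mul (hZfcd m')).mul contDiff_const
  have hQBcd : ContDiff ℝ (⊤ : ℕ∞) QB := by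
    rw [hQB]
    apply ContDiff.sum
    intro m _
    apply ContDiff.sum
    intro m' _
    exact ((hZccd m).mul (hZccd m')).mul contDiff_const
  have hY0fcd : ContDiff ℝ (⊤ : ℕ∞) Y0f := by
    rw [hY0f]
    exact (contDiff_apply ℝ ℝ _).add hQBcd
  have hψcd : ContDiff ℝ (⊤ : ℕ∞) ψ := by
    rw [hψdef]
    apply contDiff_pi.mpr
    intro i
    by_cases h : (i : ℕ) < j
    · simp only [dif_pos h]
      exact hZfcd _
    · simp only [dif_neg h]
      by_cases h2 : (i : ℕ) = j
      · simp only [if_pos h2]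
        exact (contDiff_apply ℝ ℝ _).sub hQAcd
      · simp only [if_neg h2]
        refine ContDiff.sub ?_ contDiff_const
        refine ContDiff.add ?_ ?_
        · exact (contDiff_apply ℝ ℝ _).sub (contDiff_apply ℝ ℝ _)
        · exact contDiff_const.mul (ContDiff.sum fun m _ => contDiff_const.mul (hZfcd _))
  have hψicd : ContDiff ℝ (⊤ : ℕ∞) ψi := by
    rw [hψidef]
    apply contDiff_pi.mpr
    intro i
    by_cases h : (i : ℕ) = 0
    · simp only [if_pos h]
      exact hY0fcd
    · simp only [if_neg h]
      by_cases h2 : (i : ℕ) < j + 1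
      · simp only [dif_pos h2]
        refine ContDiff.add ?_ contDiff_const
        exact hY0fcd.sub (contDiff_const.mul (contDiff_apply ℝ ℝ _))
      · simp only [dif_neg h2]
        refine ContDiff.add ?_ contDiff_const
        refine ContDiff.sub ?_ ?_
        · exact (contDiff_apply ℝ ℝ _).add hY0fcd
        · exact contDiff_const.mul (ContDiff.sum fun m _ => contDiff_const.mul
            (contDiff_apply ℝ ℝ _))
  -- ψi is a two-sided inverse of ψ
  have hZcψ : ∀ (Y : Fin (k + 1) → ℝ) (m : Fin (n + 1)), Zc (ψ Y) m = Zf Y m := by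
    intro Y m
    by_cases h : (m : ℕ) < j
    · rw [hZclt _ _ h]
      have hlt : (((⟨(m : ℕ), by omega⟩ : Fin (k + 1))) : ℕ) < j := h
      rw [hψlt _ _ hlt]
    · simp only [hZc, dif_neg h, hZf]
  have hQBψ : ∀ Y, QB (ψ Y) = QA Y := by
    intro Y
    simp only [hQB, hQA]
    exact Finset.sum_congr rfl fun m _ => Finset.sum_congr rfl fun m' _ => by
      rw [hZcψ, hZcψ]
  have hY0ψ : ∀ Y, Y0f (ψ Y) = Y 0 := by
    intro Y
    simp only [hY0f]
    rw [hψj Y ⟨j, by omega⟩ rfl, hQBψ]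
    ring
  have hlψ : ∀ Y, ψi (ψ Y) = Y := by
    intro Y
    funext i
    by_cases h0 : (i : ℕ) = 0
    · rw [hψi0 _ _ h0, hY0ψ]
      congr 1
      exact Fin.ext (by simp [h0])
    · by_cases h1 : (i : ℕ) < j + 1
      · rw [hψimid _ _ h0 h1, hY0ψ]
        have hlt : (((⟨(i : ℕ) - 1, by omega⟩ : Fin (k + 1))) : ℕ) < j := by
          show (i : ℕ) - 1 < j
          omega
        rw [hψlt _ _ hlt, hZflt _ _ hlt]
        have hidx : (⟨(((⟨(i : ℕ) - 1, by omega⟩ : Fin (k + 1))) : ℕ) + 1, by omega⟩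
            : Fin (k + 1)) = i := Fin.ext (by show (i : ℕ) - 1 + 1 = (i : ℕ); omega)
        rw [hidx]
        ring
      · rw [hψigt _ _ h1, hY0ψ]
        have hnl : ¬ ((i : ℕ) < j) := by omega
        have hne : (i : ℕ) ≠ j := by omega
        rw [hψgt _ _ hnl hne]
        have hsum : ∀ m : Fin j, ψ Y ⟨(m : ℕ), by omega⟩ = Zf Y ⟨(m : ℕ), by omega⟩ := by
          intro m
          have hlt : (((⟨(m : ℕ), by omega⟩ : Fin (k + 1))) : ℕ) < j := m.isLt
          rw [hψlt _ _ hlt]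
        have hs : (∑ m : Fin j, c i m * ψ Y ⟨(m : ℕ), by omega⟩)
            = ∑ m : Fin j, c i m * Zf Y ⟨(m : ℕ), by omega⟩ :=
          Finset.sum_congr rfl (fun m _ => by rw [hsum m])
        rw [hs]
        ring
  have hZfψi : ∀ (Z : Fin (k + 1) → ℝ) (m : Fin (n + 1)), Zf (ψi Z) m = Zc Z m := by
    intro Z m
    by_cases h : (m : ℕ) < j
    · rw [hZflt _ _ h, hZclt _ _ h]
      have h00 : (((0 : Fin (k + 1))) : ℕ) = 0 := rfl
      rw [hψi0 _ _ h00]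
      have hne : (((⟨(m : ℕ) + 1, by omega⟩ : Fin (k + 1))) : ℕ) ≠ 0 := by
        show (m : ℕ) + 1 ≠ 0
        omega
      have hlt2 : (((⟨(m : ℕ) + 1, by omega⟩ : Fin (k + 1))) : ℕ) < j + 1 := by
        show (m : ℕ) + 1 < j + 1
        omega
      rw [hψimid _ _ hne hlt2]
      have hidx : (⟨(((⟨(m : ℕ) + 1, by omega⟩ : Fin (k + 1))) : ℕ) - 1, by omega⟩
          : Fin (k + 1)) = ⟨(m : ℕ), by omega⟩ := Fin.ext (by show (m:ℕ) + 1 - 1 = (m:ℕ); omega)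
      rw [hidx]
      ring
    · simp only [hZf, dif_neg h, hZc]
  have hQAψi : ∀ Z, QA (ψi Z) = QB Z := by
    intro Z
    simp only [hQA, hQB]
    exact Finset.sum_congr rfl fun m _ => Finset.sum_congr rfl fun m' _ => by
      rw [hZfψi, hZfψi]
  have hrψ : ∀ Z, ψ (ψi Z) = Z := by
    intro Z
    funext i
    by_cases h : (i : ℕ) < j
    · rw [hψlt _ _ h]
      have hlt : ((⟨(i : ℕ), by omega⟩ : Fin (n + 1)) : ℕ) < j := h
      rw [hZfψi, hZclt _ _ hlt]
    · by_cases h2 : (i : ℕ) = j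
      · rw [hψj _ _ h2]
        have h00 : (((0 : Fin (k + 1))) : ℕ) = 0 := rfl
        rw [hψi0 _ _ h00, hQAψi]
        simp only [hY0f]
        have hidx : (⟨j, by omega⟩ : Fin (k + 1)) = i := Fin.ext h2.symm
        rw [hidx]
        ring
      · rw [hψgt _ _ h h2]
        have h00 : (((0 : Fin (k + 1))) : ℕ) = 0 := rfl
        have h1 : ¬ ((i : ℕ) < j + 1) := by omega
        rw [hψi0 _ _ h00, hψigt _ _ h1]
        have hsum : ∀ m : Fin j, Zf (ψi Z) ⟨(m : ℕ), by omega⟩ = Z ⟨(m : ℕ), by omega⟩ := by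
          intro m
          have hlt : ((⟨(m : ℕ), by omega⟩ : Fin (n + 1)) : ℕ) < j := m.isLt
          rw [hZfψi, hZclt _ _ hlt]
        have hs : (∑ m : Fin j, c i m * Zf (ψi Z) ⟨(m : ℕ), by omega⟩)
            = ∑ m : Fin j, c i m * Z ⟨(m : ℕ), by omega⟩ :=
          Finset.sum_congr rfl (fun m _ => by rw [hsum m])
        rw [hs]
        ring
  have hψsm : IsSmoothDiffeo ψ := ⟨hψcd, ψi, hψicd, hlψ, hrψ⟩
  -- final verification
  refine ⟨φ, ψ, hφsm, hψsm, ?_⟩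
  funext y
  have hLφ : ∀ i, lorentzDistSqMap p (φ y) i
      = lorentz (T y) (T y) - 2 * lorentz (T y) (p i - p 0) + K i := by
    intro i
    show lorentz ((p 0 + T y) - p i) ((p 0 + T y) - p i) = _
    have harg : (p 0 + T y) - p i = T y - (p i - p 0) := by abel
    rw [harg, lorentz_sub_sub, hK]
  have hvd : ∀ i, lorentz (T y) (p i - p 0) = ∑ m : Fin j, c i m * y ⟨(m : ℕ), by omega⟩ := by
    intro i
    rw [← hc i, lorentz_sum_right]
    exact Finset.sum_congr rfl fun m _ => by rw [lorentz_smul_right, hTw]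
  have hY0' : lorentzDistSqMap p (φ y) 0 = lorentz (T y) (T y) := by
    rw [hLφ 0]
    simp only [hK]
    have h0 : p 0 - p 0 = 0 := by abel
    rw [h0, lorentz_zero_right, lorentz_zero_left]
    ring
  have hYm : ∀ (m : Fin (n + 1)) (h : (m : ℕ) < j),
      lorentzDistSqMap p (φ y) ⟨(m : ℕ) + 1, by omega⟩
        = lorentz (T y) (T y) - 2 * y m + K ⟨(m : ℕ) + 1, by omega⟩ := by
    intro m h
    rw [hLφ]
    have hpw : p (⟨(m : ℕ) + 1, by omega⟩ : Fin (k + 1)) - p 0 = w ⟨(m : ℕ), h⟩ :=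
      (hw ⟨(m : ℕ), h⟩).symm
    rw [hpw, hTw]
  have hZfY : ∀ (m : Fin (n + 1)) (h : (m : ℕ) < j),
      Zf (lorentzDistSqMap p (φ y)) m = y m := by
    intro m h
    rw [hZflt _ _ h, hY0', hYm m h]
    ring
  funext i
  show ψ (lorentzDistSqMap p (φ y)) i = _
  by_cases h : (i : ℕ) < j
  · rw [hψlt _ _ h]
    have hlt : ((⟨(i : ℕ), by omega⟩ : Fin (n + 1)) : ℕ) < j := h
    rw [hZfY _ hlt]
    simp only [dif_pos h]
  · by_cases h2 : (i : ℕ) = j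
    · rw [hψj _ _ h2, hY0']
      have hQ : QA (lorentzDistSqMap p (φ y))
          = ∑ m ∈ Finset.univ.filter (fun m : Fin (n + 1) => (m : ℕ) < j),
              ∑ m' ∈ Finset.univ.filter (fun m' : Fin (n + 1) => (m' : ℕ) < j),
                y m * y m' * lorentz (A m) (A m') := by
        simp only [hQA]
        refine Finset.sum_congr rfl fun m hm => Finset.sum_congr rfl fun m' hm' => ?_
        rw [Finset.mem_filter] at hm hm'
        rw [hZfY _ hm.2, hZfY _ hm'.2]
      rw [hQ]
      rw [hTT y]
      simp only [dif_neg h, if_pos h2]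
      ring
    · rw [hψgt _ _ h h2, hY0', hLφ i, hvd i]
      have hsum : ∀ m : Fin j, Zf (lorentzDistSqMap p (φ y)) ⟨(m : ℕ), by omega⟩
          = y ⟨(m : ℕ), by omega⟩ := by
        intro m
        exact hZfY _ m.isLt
      have hs : (∑ m : Fin j, c i m * Zf (lorentzDistSqMap p (φ y)) ⟨(m : ℕ), by omega⟩)
          = ∑ m : Fin j, c i m * y ⟨(m : ℕ), by omega⟩ :=
        Finset.sum_congr rfl (fun m _ => by rw [hsum m])
      rw [hs]
      simp only [dif_neg h, if_neg h2]
      ring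

end LZ


theorem lorentzDistSqMap_timeLike_iff {j k n : ℕ} (hj : 1 ≤ j) (hjn : j < n) (hjk : j ≤ k)
    (p : Fin (k + 1) → (Fin (n + 1) → ℝ))
    (hdim : Module.finrank ℝ (recSub p) = j)
    (hdimj : Module.finrank ℝ
      (Submodule.span ℝ
        (Set.range fun i : Fin j =>
          p ⟨(i : ℕ) + 1, by have := i.isLt; omega⟩ - p 0)) = j) :
    AEquiv (lorentzDistSqMap p)
      (fun (x : Fin (n + 1) → ℝ) (i : Fin (k + 1)) =>
        if h : (i : ℕ) < j then x ⟨(i : ℕ), by omega⟩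
        else if (i : ℕ) = j then
          ∑ l ∈ Finset.univ.filter (fun l : Fin (n + 1) => j ≤ (l : ℕ)), x l ^ 2
        else 0) ↔ TimeLike (recSub p) := by
  set w : Fin j → (Fin (n + 1) → ℝ) :=
    fun i : Fin j => p ⟨(i : ℕ) + 1, by have := i.isLt; omega⟩ - p 0 with hwdef
  have hrank : Module.finrank ℝ (Submodule.span ℝ (Set.range w)) = j := hdimj
  have hle : Submodule.span ℝ (Set.range w) ≤ recSub p := by
    rw [Submodule.span_le]
    rintro _ ⟨i, rfl⟩
    have hidx : (⟨(i : ℕ) + 1, by have := i.isLt; omega⟩ : Fin (k + 1))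
        = (⟨(i : ℕ), by have := i.isLt; omega⟩ : Fin k).succ := Fin.ext (by simp)
    have hwi : w i = p (⟨(i : ℕ), by have := i.isLt; omega⟩ : Fin k).succ - p 0 := by
      show p ⟨(i : ℕ) + 1, by have := i.isLt; omega⟩ - p 0 = _
      exact congrArg (fun z => p z - p 0) hidx
    rw [hwi]
    exact Submodule.subset_span ⟨⟨(i : ℕ), by have := i.isLt; omega⟩, rfl⟩
  have hspan : Submodule.span ℝ (Set.range w) = recSub p :=
    Submodule.eq_of_le_of_finrank_le hle (by rw [hdim, hrank])
  constructor
  · intro hA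
    exact LZ.backward hj hjn hjk p w hspan hrank hA
  · intro hT
    exact LZ.forward hj hjn hjk p w (fun i => rfl) hspan hrank hT
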